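/- Let μ be a closure operator on 2^U (U finite) and α a nonredundant cover of μ. If (X, C) and (Y, C) are distinct pairs in α with X →̇ Y (X directly determines Y), then α is redundant — contradiction; hence a nonredundant cover contains at most one domain element per closed set up to direct determination: if (X,C), (Y,C) ∈ α with X →̇ Y then X = Y. -/

import Mathlib

open Set

variable {U : Type*}

/-- A closure operator on the power set of `U`: inclusion, monotonicity, idempotence. -/
def IsClosure (μ : Set U → Set U) : Prop :=
  (∀ X, X ⊆ μ X) ∧ (∀ X Y : Set U, X ⊆ Y → μ X ⊆ μ Y) ∧ (∀ X, μ (μ X) = μ X)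

/-- `K` is a key of `μ`: no proper subset of `K` has the same closure. -/
def IsKey (μ : Set U → Set U) (K : Set U) : Prop :=
  ∀ S : Set U, S ⊂ K → μ S ≠ μ K

/-- One step of the Extension-by-Closure recurrence for a set of pairs `α`. -/
def ecStep (α : Set (Set U × Set U)) (X : Set U) : Set U :=
  X ∪ ⋃ p ∈ {q ∈ α | q.1 ⊆ X}, p.2

/-- The iterates `Xα_t` of the Extension-by-Closure recurrence. -/
def ecIter (α : Set (Set U × Set U)) (X : Set U) : ℕ → Set U
  | 0 => X
  | n + 1 => ecStep α (ecIter α X n)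

/-- `Xα⁺`: the eventual stable value of the increasing recurrence
(for finite `U` the union over all iterates is the stable limit). -/
def extC (α : Set (Set U × Set U)) : Set U → Set U :=
  fun X => ⋃ n, ecIter α X n

/-- The closure `μ` viewed as a set of pairs `(X, Xμ)`. -/
def graphOf (μ : Set U → Set U) : Set (Set U × Set U) :=
  {p | p.2 = μ p.1}

/-- `α` is a cover of `μ`: a subset of `μ` (as pairs) with `α⁺ = μ`. -/
def IsCover (μ : Set U → Set U) (α : Set (Set U × Set U)) : Prop :=
  α ⊆ graphOf μ ∧ extC α = μ

/-- A nonredundant cover of `μ`: a cover no proper subset of which has closure `μ`. -/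
def NonredundantCover (μ : Set U → Set U) (α : Set (Set U × Set U)) : Prop :=
  IsCover μ α ∧ ∀ β : Set (Set U × Set U), β ⊂ α → extC β ≠ μ

def Closed (α : Set (Set U × Set U)) (W : Set U) : Prop :=
  ∀ p ∈ α, p.1 ⊆ W → p.2 ⊆ W

lemma ecIter_mono (α : Set (Set U × Set U)) (X : Set U) : Monotone (ecIter α X) := by
  apply monotone_nat_of_le_succ
  intro n
  exact Set.subset_union_left

lemma subset_extC (α : Set (Set U × Set U)) (X : Set U) : X ⊆ extC α X :=
  Set.subset_iUnion (ecIter α X) 0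

lemma extC_subset_of_closed {α : Set (Set U × Set U)} {X W : Set U}
    (hXW : X ⊆ W) (hC : Closed α W) : extC α X ⊆ W := by
  apply Set.iUnion_subset
  intro n
  induction n with
  | zero => exact hXW
  | succ n ih =>
    apply Set.union_subset ih
    apply Set.iUnion₂_subset
    intro p hp
    exact hC p hp.1 (hp.2.trans ih)

lemma closed_extC [Finite U] (α : Set (Set U × Set U)) (X : Set U) :
    Closed α (extC α X) := by
  intro p hp hp1
  have key : ∀ S : Set U, S.Finite → S ⊆ extC α X → ∃ N, S ⊆ ecIter α X N := by
    intro S hS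
    refine Set.Finite.induction_on
      (motive := fun S _ => S ⊆ extC α X → ∃ N, S ⊆ ecIter α X N) S hS
      (fun _ => ⟨0, by simp⟩) ?_
    intro a s _ _ ih h
    obtain ⟨N, hN⟩ := ih (fun x hx => h (Set.mem_insert_of_mem _ hx))
    obtain ⟨m, hm⟩ := Set.mem_iUnion.mp (h (Set.mem_insert _ _))
    exact ⟨max N m, Set.insert_subset (ecIter_mono α X (le_max_right N m) hm)
      (hN.trans (ecIter_mono α X (le_max_left N m)))⟩
  obtain ⟨N, hN⟩ := key p.1 (Set.toFinite _) hp1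
  have : p.2 ⊆ ecIter α X (N + 1) := fun x hx =>
    Set.mem_union_right _
      (Set.mem_biUnion (show p ∈ {q ∈ α | q.1 ⊆ ecIter α X N} from ⟨hp, hN⟩) hx)
  exact this.trans (Set.subset_iUnion (ecIter α X) (N + 1))

lemma extC_mono_rules [Finite U] {α β : Set (Set U × Set U)} (h : α ⊆ β) (X : Set U) :
    extC α X ⊆ extC β X :=
  extC_subset_of_closed (subset_extC β X)
    (fun p hp => closed_extC β X p (h hp))

theorem nonredundant_no_dd_pair [Finite U] (μ : Set U → Set U) (hμ : IsClosure μ)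
    (α : Set (Set U × Set U)) (hα : NonredundantCover μ α)
    (X Y C : Set U) (hX : (X, C) ∈ α) (hY : (Y, C) ∈ α)
    (hdd : Y ⊆ extC {p ∈ graphOf μ | p.2 ⊂ C} X) :
    X = Y := by
  by_contra hne
  set β : Set (Set U × Set U) := α \ {(X, C)} with hβ
  have hXC : (X, C) ∉ β := fun h => h.2 rfl
  have hβss : β ⊂ α := ⟨Set.diff_subset, fun h => hXC (h hX)⟩
  apply hα.2 β hβss
  have hcov : extC α = μ := hα.1.2
  have hgr : ∀ p ∈ α, p.2 = μ p.1 := fun p hp => hα.1.1 hp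
  have main : ∀ n : ℕ, ∀ Z : Set U, (μ Z).ncard ≤ n → μ Z ⊆ extC β Z := by
    intro n
    induction n using Nat.strong_induction_on with
    | _ n ih =>
      intro Z hn
      set W := extC β Z with hW
      have hWsub : W ⊆ μ Z := by
        rw [← hcov]; exact extC_mono_rules Set.diff_subset Z
      have hclβ : Closed β W := closed_extC β Z
      have hclα : Closed α W := by
        intro p hp hp1
        by_cases hpx : p = (X, C)
        · subst hpx
          have hCμ : C = μ X := hgr _ hX
          have hCsub : C ⊆ μ Z := by
            rw [hCμ]
            calc μ X ⊆ μ (μ Z) := hμ.2.1 _ _ (hp1.trans hWsub)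
              _ = μ Z := hμ.2.2 _
          have hcl0 : Closed {p ∈ graphOf μ | p.2 ⊂ C} W := by
            intro q hq hq1
            have hq2 : q.2 = μ q.1 := hq.1
            have hss : μ q.1 ⊂ μ Z :=
              Set.ssubset_of_ssubset_of_subset (hq2 ▸ hq.2) hCsub
            have hlt : (μ q.1).ncard < n :=
              lt_of_lt_of_le (Set.ncard_lt_ncard hss (Set.toFinite _)) hn
            have := ih _ hlt q.1 le_rfl
            rw [hq2]
            exact this.trans (extC_subset_of_closed hq1 hclβ)
          have hYW : Y ⊆ W := hdd.trans (extC_subset_of_closed hp1 hcl0)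
          have hYβ : (Y, C) ∈ β :=
            ⟨hY, fun h => hne (congrArg Prod.fst h).symm⟩
          exact hclβ (Y, C) hYβ hYW
        · exact hclβ p ⟨hp, hpx⟩ hp1
      rw [← hcov]
      exact extC_subset_of_closed (subset_extC β Z) hclα
  funext Z
  apply Set.Subset.antisymm
  · rw [← hcov]; exact extC_mono_rules Set.diff_subset Z
  · exact main _ Z le_rfl
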